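/- Let S ⊆ ℕ_0^d be a GNS, n ∈ S with n ≠ 0, and let ≺ be a monomial order on ℕ_0^d. Then S is symmetric if and only if C(S,n) can be written as C(S,n) = {a_0 ≺ a_1 ≺ ⋯ ≺ a_m} (listed in ≺-increasing order) with a_i + a_{m−i} = a_m for all i ∈ {0,1,…,m}. -/

import Mathlib

open scoped BigOperators

/-- A generalized numerical semigroup: a submonoid of `ℕ^d` with finite complement. -/
def IsGNS {d : ℕ} (S : Set (Fin d → ℕ)) : Prop :=
  (0 : Fin d → ℕ) ∈ S ∧ (∀ x y : Fin d → ℕ, x ∈ S → y ∈ S → x + y ∈ S) ∧ Sᶜ.Finite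

/-- The genus: number of gaps. -/
noncomputable def genus {d : ℕ} (S : Set (Fin d → ℕ)) : ℕ := Sᶜ.ncard

/-- Pseudo-Frobenius elements. -/
def PF {d : ℕ} (S : Set (Fin d → ℕ)) : Set (Fin d → ℕ) :=
  {h | h ∉ S ∧ ∀ s ∈ S, s ≠ 0 → h + s ∈ S}

/-- The type: number of pseudo-Frobenius elements. -/
noncomputable def typ {d : ℕ} (S : Set (Fin d → ℕ)) : ℕ := (PF S).ncard

/-- Maximal elements of a set with respect to a relation. -/
def Maximals {α : Type*} (le : α → α → Prop) (X : Set α) : Set α :=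
  {x ∈ X | ∀ y ∈ X, le x y → x = y}

/-- `f` is the unique maximal element of the set of gaps w.r.t. the componentwise order. -/
def IsFrobenius {d : ℕ} (S : Set (Fin d → ℕ)) (f : Fin d → ℕ) : Prop :=
  Maximals (· ≤ ·) Sᶜ = {f}

/-- Almost symmetric: `2 g(S) + 1 - t(S) = ∏ (h i + 1)` for some gap `h`. -/
def AlmostSymmetric {d : ℕ} (S : Set (Fin d → ℕ)) : Prop :=
  ∃ h ∉ S, 2 * genus S + 1 = typ S + ∏ i, (h i + 1)

/-- Special gaps. -/
def SG {d : ℕ} (S : Set (Fin d → ℕ)) : Set (Fin d → ℕ) :=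
  {h ∈ PF S | h + h ∈ S}

/-- The partial order `≤_S` : `y ≤_S x` iff `x - y ∈ S`. -/
def leS {d : ℕ} (S : Set (Fin d → ℕ)) (x y : Fin d → ℕ) : Prop :=
  ∃ s ∈ S, x + s = y

/-- The Apéry set of `S` with respect to `n`. -/
def Ap {d : ℕ} (S : Set (Fin d → ℕ)) (n : Fin d → ℕ) : Set (Fin d → ℕ) :=
  {s ∈ S | ¬ ∃ u ∈ S, u + n = s}

/-- The reduced Apéry set of `S` with respect to `n`. -/
def Cred {d : ℕ} (S : Set (Fin d → ℕ)) (n : Fin d → ℕ) : Set (Fin d → ℕ) :=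
  {s ∈ Ap S n | ∃ h, h ∉ S ∧ s ≤ h + n}

/-- A monomial order on `ℕ^d` given by its strict-order relation. -/
def IsMonomialOrder (d : ℕ) (lt : (Fin d → ℕ) → (Fin d → ℕ) → Prop) : Prop :=
  (∀ a, ¬ lt a a) ∧ (∀ a b c, lt a b → lt b c → lt a c) ∧
  (∀ a b, a ≠ b → lt a b ∨ lt b a) ∧
  (∀ u a b, lt a b → lt (a + u) (b + u)) ∧
  (∀ a, a ≠ (0 : Fin d → ℕ) → lt 0 a)

/-- Minimal generator of a GNS. -/
def IsMinGen {d : ℕ} (S : Set (Fin d → ℕ)) (x : Fin d → ℕ) : Prop :=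
  x ∈ S ∧ x ≠ 0 ∧ ∀ y ∈ S, ∀ z ∈ S, y ≠ 0 → z ≠ 0 → y + z ≠ x

/-- Irreducible GNS: not an intersection of two GNSs properly containing it. -/
def GNSIrreducible {d : ℕ} (S : Set (Fin d → ℕ)) : Prop :=
  ¬ ∃ S₁ S₂ : Set (Fin d → ℕ), IsGNS S₁ ∧ IsGNS S₂ ∧ S ⊂ S₁ ∧ S ⊂ S₂ ∧ S = S₁ ∩ S₂

/-- Pseudo-symmetric: `PF S = {f, f/2}`. -/
def PseudoSymmetric {d : ℕ} (S : Set (Fin d → ℕ)) : Prop :=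
  ∃ f q : Fin d → ℕ, f ≠ q ∧ q + q = f ∧ PF S = {f, q}


namespace St14

variable {d : ℕ} {S : Set (Fin d → ℕ)}

lemma sum_pos_of_ne_zero {x : Fin d → ℕ} (hx : x ≠ 0) : 0 < ∑ i, x i := by
  rcases Nat.eq_zero_or_pos (∑ i, x i) with h | h
  · exfalso; apply hx; funext i
    exact Finset.sum_eq_zero_iff.mp h i (Finset.mem_univ i)
  · exact h

lemma pf_dominates (hS : IsGNS S) {h : Fin d → ℕ} (hh : h ∉ S) :
    ∃ p ∈ PF S, ∃ s ∈ S, h + s = p := by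
  set T : Set (Fin d → ℕ) := {x | x ∉ S ∧ ∃ s ∈ S, h + s = x} with hT
  have hTfin : T.Finite := hS.2.2.subset (fun x hx => hx.1)
  have hTne : T.Nonempty := ⟨h, hh, 0, hS.1, add_zero h⟩
  obtain ⟨p, hp, hmax⟩ := Set.Finite.exists_maximalFor (fun x => ∑ i, x i) T hTfin hTne
  obtain ⟨hpS, s, hsS, hsp⟩ := hp
  refine ⟨p, ⟨hpS, ?_⟩, s, hsS, hsp⟩
  intro t ht ht0
  by_contra hpt
  have hptT : p + t ∈ T := ⟨hpt, s + t, hS.2.1 s t hsS ht, by rw [← add_assoc, hsp]⟩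
  have hle : (∑ i, p i) ≤ ∑ i, (p + t) i := by
    apply Finset.sum_le_sum; intro i _; exact Nat.le_add_right _ _
  have heq : (∑ i, (p + t) i) ≤ ∑ i, p i := hmax hptT hle
  have h1 : (∑ i, (p + t) i) = (∑ i, p i) + ∑ i, t i := by
    rw [← Finset.sum_add_distrib]; rfl
  have h2 := sum_pos_of_ne_zero ht0
  omega

lemma cred_finite (hS : IsGNS S) (n : Fin d → ℕ) : (Cred S n).Finite := by
  apply Set.Finite.subset (Set.Finite.biUnion hS.2.2 (fun h _ => Set.finite_Iic (h + n)))
  rintro x ⟨-, h, hh, hle⟩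
  exact Set.mem_biUnion hh hle

lemma pf_mem_cred (hS : IsGNS S) {n p : Fin d → ℕ} (hn : n ∈ S) (hn0 : n ≠ 0)
    (hp : p ∈ PF S) : p + n ∈ Cred S n := by
  refine ⟨⟨hp.2 n hn hn0, ?_⟩, p, hp.1, le_refl _⟩
  rintro ⟨u, hu, he⟩
  exact hp.1 (by rwa [add_right_cancel he] at hu)

lemma antitone_eq_sub (m : ℕ) (g : ℕ → ℕ) (h1 : ∀ i ≤ m, g i ≤ m)
    (h2 : ∀ i j, i < j → j ≤ m → g j < g i) : ∀ i ≤ m, g i = m - i := by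
  have A : ∀ i, i ≤ m → g i + i ≤ m := by
    intro i
    induction i with
    | zero => intro _; simpa using h1 0 (Nat.zero_le m)
    | succ k ih =>
      intro hk1
      have hk : k ≤ m := Nat.le_of_succ_le hk1
      have h := h2 k (k + 1) (Nat.lt_succ_self k) hk1
      have := ih hk
      omega
  have B : ∀ k, k ≤ m → m ≤ g (m - k) + (m - k) := by
    intro k
    induction k with
    | zero =>
      intro _
      simp only [Nat.sub_zero]
      omega
    | succ k ih =>
      intro hk1
      have hk : k ≤ m := Nat.le_of_succ_le hk1
      have ihk := ih hk
      have hlt : m - (k + 1) < m - k := by omega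
      have h := h2 (m - (k + 1)) (m - k) hlt (Nat.sub_le m k)
      omega
  intro i hi
  have hA := A i hi
  have hB := B (m - i) (Nat.sub_le m i)
  rw [show m - (m - i) = i by omega] at hB
  omega

end St14

open St14 in
/-- `S` is symmetric iff `C(S,n) = {a_0 ≺ ⋯ ≺ a_m}` with
`a_i + a_{m-i} = a_m` for all `i`. -/
theorem statement14 (d : ℕ) (hd : 0 < d) (S : Set (Fin d → ℕ)) (hS : IsGNS S)
    (n : Fin d → ℕ) (hn : n ∈ S) (hn0 : n ≠ 0)
    (lt : (Fin d → ℕ) → (Fin d → ℕ) → Prop) (hlt : IsMonomialOrder d lt) :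
    (∃ f : Fin d → ℕ, PF S = {f}) ↔
      ∃ (m : ℕ) (a : ℕ → (Fin d → ℕ)),
        (∀ i j, i < j → j ≤ m → lt (a i) (a j)) ∧
        Cred S n = a '' Set.Icc 0 m ∧
        (∀ i, i ≤ m → a i + a (m - i) = a m) := by
  obtain ⟨hirr, htrans, htot, htrl, hzlt⟩ := hlt
  have hasym : ∀ x y, lt x y → ¬ lt y x := fun x y hxy hyx => hirr x (htrans _ _ _ hxy hyx)
  have hcancel : ∀ (u x y : Fin d → ℕ), lt (x + u) (y + u) → lt x y := by
    intro u x y hxy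
    rcases eq_or_ne x y with rfl | hne
    · exact absurd hxy (hirr _)
    rcases htot x y hne with h | h
    · exact h
    · exact absurd (htrl u y x h) (hasym _ _ hxy)
  constructor
  · -- forward
    rintro ⟨f, hf⟩
    have hfPF : f ∈ PF S := by rw [hf]; exact rfl
    have hfS : f ∉ S := hfPF.1
    have hchar : ∀ x, x ∉ S → ∃ s ∈ S, x + s = f := by
      intro x hx
      obtain ⟨p, hp, s, hs, hsx⟩ := pf_dominates hS hx
      rw [hf, Set.mem_singleton_iff] at hp
      exact ⟨s, hs, by rw [hsx, hp]⟩
    have hFC : f + n ∈ Cred S n := pf_mem_cred hS hn hn0 hfPF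
    have hle : ∀ c ∈ Cred S n, ∀ i, c i ≤ f i + n i := by
      rintro c ⟨-, h, hhS, hch⟩ i
      obtain ⟨s, -, hsf⟩ := hchar h hhS
      have h1 : h i + s i = f i := congrFun hsf i
      have h2 : c i ≤ h i + n i := hch i
      omega
    set φ : (Fin d → ℕ) → (Fin d → ℕ) := fun c => fun i => f i + n i - c i with hφ
    have hφaddi : ∀ c ∈ Cred S n, ∀ i, c i + φ c i = f i + n i := by
      intro c hc i
      have := hle c hc i
      simp only [hφ]
      omega
    have hφadd : ∀ c ∈ Cred S n, c + φ c = f + n := by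
      intro c hc
      funext i
      simp only [Pi.add_apply]
      exact hφaddi c hc i
    have hφC : ∀ c ∈ Cred S n, φ c ∈ Cred S n := by
      intro c hc
      have hadd := hφaddi c hc
      obtain ⟨⟨hcS, hcAp⟩, -⟩ := hc
      refine ⟨⟨?_, ?_⟩, f, hfS, ?_⟩
      · by_contra hφS
        obtain ⟨s, hsS, hsf⟩ := hchar _ hφS
        apply hcAp
        refine ⟨s, hsS, ?_⟩
        funext i
        have h1 : φ c i + s i = f i := congrFun hsf i
        have h2 := hadd i
        simp only [Pi.add_apply]
        omega
      · rintro ⟨u, huS, hu⟩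
        apply hfS
        have hcu : c + u = f := by
          funext i
          have h1 : u i + n i = φ c i := congrFun hu i
          have h2 := hadd i
          simp only [Pi.add_apply]
          omega
        rw [← hcu]
        exact hS.2.1 c u hcS huS
      · intro i
        simp only [hφ, Pi.add_apply]
        omega
    have hltF : ∀ c ∈ Cred S n, c ≠ f + n → lt c (f + n) := by
      intro c hc hcF
      have hadd := hφadd c hc
      have hφ0 : φ c ≠ 0 := by
        intro h0
        apply hcF
        rw [← hadd, h0, add_zero]
      have h1 := htrl c 0 (φ c) (hzlt _ hφ0)
      rw [zero_add, add_comm] at h1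
      rwa [hadd] at h1
    -- sorting
    classical
    have hfin := cred_finite hS n
    set r : (Fin d → ℕ) → (Fin d → ℕ) → Prop := fun x y => x = y ∨ lt x y with hr
    haveI : DecidableRel r := Classical.decRel r
    haveI : IsTrans _ r := ⟨by
      rintro a b c (rfl | hab) (rfl | hbc)
      · exact Or.inl rfl
      · exact Or.inr hbc
      · exact Or.inr hab
      · exact Or.inr (htrans _ _ _ hab hbc)⟩
    haveI : IsAntisymm _ r := ⟨by
      rintro a b (rfl | hab) (h | hba)
      · rfl
      · rfl
      · exact h.symm
      · exact absurd hba (hasym _ _ hab)⟩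
    haveI : IsTotal _ r := ⟨by
      intro a b
      rcases eq_or_ne a b with rfl | hne
      · exact Or.inl (Or.inl rfl)
      rcases htot a b hne with h | h
      · exact Or.inl (Or.inr h)
      · exact Or.inr (Or.inr h)⟩
    set l := Finset.sort hfin.toFinset r with hl
    have hmeml : ∀ x, x ∈ Cred S n ↔ x ∈ l := by
      intro x
      rw [hl, Finset.mem_sort, Set.Finite.mem_toFinset]
    have hsorted : List.Pairwise r l := by rw [hl]; exact Finset.pairwise_sort _ r
    have hnd : l.Nodup := by rw [hl]; exact Finset.sort_nodup _ r
    have hlen : 0 < l.length := by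
      have hFl : f + n ∈ l := (hmeml _).mp hFC
      exact List.length_pos_iff.mpr (List.ne_nil_of_mem hFl)
    set m := l.length - 1 with hm
    set a : ℕ → (Fin d → ℕ) := fun i => l.getD i 0 with ha
    have hget : ∀ i, ∀ h : i < l.length, a i = l.get ⟨i, h⟩ := by
      intro i h
      simp only [ha]
      exact List.getD_eq_get l 0 ⟨i, h⟩
    have hstrict : ∀ i j, i < j → j ≤ m → lt (a i) (a j) := by
      intro i j hij hjm
      have hjl : j < l.length := by omega
      have hil : i < l.length := by omega
      rw [hget i hil, hget j hjl]
      have hrel := hsorted.rel_get_of_lt (a := ⟨i, hil⟩) (b := ⟨j, hjl⟩)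
        (by simp only [Fin.mk_lt_mk]; exact hij)
      rcases hrel with h | h
      · exfalso
        have hinj := List.nodup_iff_injective_get.mp hnd
        have h2 := hinj h
        simp only [Fin.mk.injEq] at h2
        omega
      · exact h
    have himage : Cred S n = a '' Set.Icc 0 m := by
      ext x
      rw [hmeml x, List.mem_iff_get]
      constructor
      · rintro ⟨⟨i, hi⟩, hx⟩
        exact ⟨i, ⟨Nat.zero_le i, by omega⟩, by rw [hget i hi]; exact hx⟩
      · rintro ⟨i, ⟨-, him⟩, hx⟩
        have hi : i < l.length := by omega
        exact ⟨⟨i, hi⟩, by rw [← hget i hi]; exact hx⟩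
    have haC : ∀ i, i ≤ m → a i ∈ Cred S n := by
      intro i hi
      rw [himage]
      exact ⟨i, ⟨Nat.zero_le i, hi⟩, rfl⟩
    have hjex : ∀ i, i ≤ m → ∃ k, k ≤ m ∧ a k = φ (a i) := by
      intro i hi
      have hmem := hφC _ (haC i hi)
      rw [himage] at hmem
      obtain ⟨k, ⟨-, hk⟩, hak⟩ := hmem
      exact ⟨k, hk, hak⟩
    set g : ℕ → ℕ := fun i => if h : ∃ k, k ≤ m ∧ a k = φ (a i) then h.choose else 0 with hg
    have hgspec : ∀ i, i ≤ m → g i ≤ m ∧ a (g i) = φ (a i) := by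
      intro i hi
      have h := hjex i hi
      simp only [hg, dif_pos h]
      exact h.choose_spec
    have hganti : ∀ i j, i < j → j ≤ m → g j < g i := by
      intro i j hij hjm
      have him : i ≤ m := le_of_lt (lt_of_lt_of_le hij hjm)
      obtain ⟨hgi, hai⟩ := hgspec i him
      obtain ⟨hgj, haj⟩ := hgspec j hjm
      have h1 : lt (a i) (a j) := hstrict i j hij hjm
      have h2 := htrl (φ (a j)) (a i) (a j) h1
      rw [hφadd _ (haC j hjm), ← hφadd _ (haC i him)] at h2
      rw [add_comm (a i) (φ (a j)), add_comm (a i) (φ (a i))] at h2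
      have h3 : lt (φ (a j)) (φ (a i)) := hcancel _ _ _ h2
      rw [← hai, ← haj] at h3
      by_contra hcon
      push_neg at hcon
      rcases Nat.lt_or_ge (g i) (g j) with h | h
      · exact hasym _ _ (hstrict _ _ h hgj) h3
      · have heq : g i = g j := by omega
        rw [heq] at h3
        exact hirr _ h3
    have hgeq := antitone_eq_sub m g (fun i hi => (hgspec i hi).1) hganti
    have ham : a m = f + n := by
      have hFim : f + n ∈ a '' Set.Icc 0 m := by rw [← himage]; exact hFC
      obtain ⟨k, ⟨-, hkm⟩, hak⟩ := hFim
      rcases eq_or_ne k m with rfl | hne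
      · exact hak
      · exfalso
        have hk : k < m := lt_of_le_of_ne hkm hne
        have h1 : lt (a k) (a m) := hstrict k m hk (le_refl m)
        have h2 : a m ≠ f + n := by
          intro h
          rw [h, hak] at h1
          exact hirr _ h1
        have h3 : lt (a m) (f + n) := hltF _ (haC m (le_refl m)) h2
        rw [hak] at h1
        exact hasym _ _ h1 h3
    refine ⟨m, a, hstrict, himage, ?_⟩
    intro i hi
    obtain ⟨hgi, hai⟩ := hgspec i hi
    rw [← hgeq i hi, hai, hφadd _ (haC i hi), ham]
  · -- backward
    rintro ⟨m, a, hsorted, hC, hpair⟩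
    have ha0 : a 0 = 0 := by
      have h := hpair 0 (Nat.zero_le m)
      rw [Nat.sub_zero] at h
      funext i
      have h2 := congrFun h i
      simp only [Pi.add_apply] at h2
      show a 0 i = 0
      omega
    have haC : ∀ i, i ≤ m → a i ∈ Cred S n := by
      intro i hi
      rw [hC]
      exact ⟨i, ⟨Nat.zero_le i, hi⟩, rfl⟩
    obtain ⟨-, h0, hh0S, -⟩ := haC 0 (Nat.zero_le m)
    obtain ⟨p, hpPF, -⟩ := pf_dominates hS hh0S
    have key : ∀ q, q ∈ PF S → q + n = a m := by
      intro q hq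
      have hqC : q + n ∈ Cred S n := pf_mem_cred hS hn hn0 hq
      rw [hC] at hqC
      obtain ⟨k, ⟨-, hkm⟩, hak⟩ := hqC
      have hpairk := hpair k hkm
      rcases eq_or_ne (a (m - k)) 0 with hy | hy
      · rw [hy, add_zero] at hpairk
        rw [← hak, hpairk]
      · exfalso
        have hyC := haC (m - k) (Nat.sub_le m k)
        have hyS : a (m - k) ∈ S := hyC.1.1
        have hmC := haC m (le_refl m)
        apply hmC.1.2
        refine ⟨q + a (m - k), hq.2 _ hyS hy, ?_⟩
        calc q + a (m - k) + n = (q + n) + a (m - k) := by ring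
          _ = a k + a (m - k) := by rw [hak]
          _ = a m := hpairk
    refine ⟨p, Set.ext fun q => ⟨fun hq => ?_, fun hq => ?_⟩⟩
    · have h1 := key q hq
      have h2 := key p hpPF
      rw [Set.mem_singleton_iff]
      have h3 : q + n = p + n := by rw [h1, h2]
      exact add_right_cancel h3
    · rw [Set.mem_singleton_iff] at hq
      rw [hq]
      exact hpPF
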